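/- Let S be a nonempty finite type with decidable equality, let P : Matrix S S ℝ, let π : S → ℝ have all entries strictly positive, let D = Matrix.diagonal π, let Π be the matrix with Π(s, s') = π(s') (every row equal to π), and let P̃ be the time-reversal of P with respect to π. Then 1 − P̃ + Π = D⁻¹ · (1 − P + Π)ᵀ · D. Consequently, if 1 − P + Π is invertible then 1 − P̃ + Π is invertible, and the fundamental matrices satisfy the balance relation Z̃ = D⁻¹ · Zᵀ · D, where Z = (1 − P + Π)⁻¹ and Z̃ = (1 − P̃ + Π)⁻¹; that is, Z̃(s, s') = π(s')·Z(s', s)/π(s) for all s, s'. -/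

import Mathlib

open Matrix

/-- With `D = diagonal π` and `Π` the matrix each of whose rows equals
`π`, the time-reversal satisfies `1 − P̃ + Π = D⁻¹·(1 − P + Π)ᵀ·D`; hence if
`1 − P + Π` is invertible so is `1 − P̃ + Π`, and the fundamental matrices satisfy
`Z̃(s,s') = π(s')·Z(s',s)/π(s)`. -/
theorem stmt_12 (S : Type*) [Fintype S] [Nonempty S] [DecidableEq S]
    (P : Matrix S S ℝ) (pi : S → ℝ) (hpos : ∀ s, 0 < pi s)
    (D : Matrix S S ℝ) (hD : D = Matrix.diagonal pi)
    (Pi : Matrix S S ℝ) (hPi : ∀ s s', Pi s s' = pi s')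
    (Pt : Matrix S S ℝ) (hPt : ∀ s s', Pt s s' = pi s' * P s' s / pi s) :
    (1 - Pt + Pi = D⁻¹ * (1 - P + Pi)ᵀ * D) ∧
    (IsUnit (1 - P + Pi) →
      IsUnit (1 - Pt + Pi) ∧
      ∀ s s', (1 - Pt + Pi)⁻¹ s s' = pi s' * (1 - P + Pi)⁻¹ s' s / pi s) := by
  have hne : ∀ s, pi s ≠ 0 := fun s => (hpos s).ne'
  have hDinv : D⁻¹ = Matrix.diagonal (fun s => (pi s)⁻¹) := by
    rw [hD]
    apply Matrix.inv_eq_right_inv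
    rw [Matrix.diagonal_mul_diagonal]
    convert Matrix.diagonal_one using 2
    funext s
    exact mul_inv_cancel₀ (hne s)
  have hDunit : IsUnit D := by
    rw [hD, Matrix.isUnit_iff_isUnit_det, Matrix.det_diagonal, isUnit_iff_ne_zero]
    exact Finset.prod_ne_zero_iff.2 fun s _ => hne s
  have key : 1 - Pt + Pi = D⁻¹ * (1 - P + Pi)ᵀ * D := by
    ext s s'
    rw [hDinv, hD]
    simp only [Matrix.mul_apply, Matrix.diagonal_apply, Matrix.transpose_apply,
      Matrix.add_apply, Matrix.sub_apply, Matrix.one_apply, hPi, hPt]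
    rw [Finset.sum_eq_single s']
    · rw [Finset.sum_eq_single s]
      · have h0 := hne s
        have h1 := hne s'
        simp only [if_pos rfl, ↓reduceIte]
        by_cases h : s = s'
        · subst h; simp only [if_pos rfl, ↓reduceIte]; field_simp
        · rw [if_neg h, if_neg fun hh : s' = s => h hh.symm]
          field_simp
          ring
      · intro b _ hb; simp [if_neg (Ne.symm hb)]
      · simp
    · intro b _ hb
      simp [if_neg hb]
    · simp
  refine ⟨key, fun hM => ?_⟩
  have hMt : IsUnit (1 - P + Pi)ᵀ := by
    rwa [Matrix.isUnit_iff_isUnit_det, Matrix.det_transpose, ← Matrix.isUnit_iff_isUnit_det]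
  have hDi : IsUnit D⁻¹ := Matrix.isUnit_nonsing_inv_iff.2 hDunit
  have hUnit : IsUnit (1 - Pt + Pi) := by
    rw [key]; exact (hDi.mul hMt).mul hDunit
  refine ⟨hUnit, fun s s' => ?_⟩
  have hinv : (1 - Pt + Pi)⁻¹ = D⁻¹ * ((1 - P + Pi)⁻¹)ᵀ * D := by
    rw [key, Matrix.mul_inv_rev, Matrix.mul_inv_rev,
      Matrix.nonsing_inv_nonsing_inv D ((Matrix.isUnit_iff_isUnit_det D).1 hDunit),
      Matrix.transpose_nonsing_inv, Matrix.mul_assoc]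
  rw [hinv, hDinv, hD]
  simp only [Matrix.mul_apply, Matrix.diagonal_apply, Matrix.transpose_apply]
  rw [Finset.sum_eq_single s']
  · rw [Finset.sum_eq_single s]
    · have h0 := hne s
      simp only [if_pos rfl, ↓reduceIte]
      field_simp
    · intro b _ hb; simp [if_neg (Ne.symm hb)]
    · simp
  · intro b _ hb; simp [if_neg hb]
  · simp
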